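/- Let X : ℝ → [0,∞) be continuous with X(0)=0 and X(t) → ∞ as |t| → ∞, and d_X the associated CRT pseudometric. Fix t > 0 and set h_t = inf_{u ≥ t} X(u), Γ_t(r) = inf{u ≥ t : X(u) = X(t) - r} for 0 ≤ r ≤ X(t) - h_t. Then d_X(Γ_t(r), Γ_t(r')) = |r - r'| for all r, r' ∈ [0, X(t) - h_t], i.e. r ↦ [Γ_t(r)] is a geodesic path in the quotient tree from [t] toward the spine. -/
import Mathlib


open Set Filter

/-- `č(s,t)` for the self-similar CRT pseudometric. -/
noncomputable def crtCheck (X : ℝ → ℝ) (s t : ℝ) : ℝ :=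
  if 0 ≤ s * t then sInf (X '' Set.uIcc s t)
  else sInf (X '' (Set.Ioo (min s t) (max s t))ᶜ)

/-- The self-similar CRT pseudometric `d_X(s,t) = X s + X t - 2 č(s,t)`. -/
noncomputable def crtDist (X : ℝ → ℝ) (s t : ℝ) : ℝ :=
  X s + X t - 2 * crtCheck X s t

/-- fix `t > 0`, let `h_t = inf_{u ≥ t} X u` and
`Γ_t(r) = inf {u ≥ t : X u = X t - r}` for `0 ≤ r ≤ X t - h_t`. Then
`d_X(Γ_t(r), Γ_t(r')) = |r - r'|`, i.e. `r ↦ [Γ_t(r)]` is a geodesic path in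
the quotient tree from `[t]` toward the spine. -/
theorem crt_descent_geodesic (X : ℝ → ℝ)
    (hcont : Continuous X) (hnonneg : ∀ u, 0 ≤ X u) (h0 : X 0 = 0)
    (hdiv : Tendsto X (cocompact ℝ) atTop)
    (t : ℝ) (ht : 0 < t)
    (h : ℝ) (hh : h = sInf (X '' Ici t))
    (Γ : ℝ → ℝ) (hΓ : ∀ r, Γ r = sInf {u : ℝ | t ≤ u ∧ X u = X t - r}) :
    ∀ r ∈ Icc 0 (X t - h), ∀ r' ∈ Icc 0 (X t - h),
      crtDist X (Γ r) (Γ r') = |r - r'| := by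
  -- Step 1: the infimum h is attained at some u₀ ≥ t.
  obtain ⟨K, hKc, hK⟩ : ∃ K, IsCompact K ∧ ∀ u ∉ K, X t + 1 ≤ X u := by
    have := (hasBasis_cocompact.eventually_iff).mp
      (hdiv.eventually (eventually_ge_atTop (X t + 1)))
    obtain ⟨K, hKc, hK⟩ := this
    exact ⟨K, hKc, hK⟩
  obtain ⟨M, hM⟩ : ∃ M, ∀ x ∈ K, x ≤ M := by
    rcases hKc.bddAbove with ⟨M, hM⟩
    exact ⟨M, fun x hx => hM hx⟩
  set M' := max t M with hM'
  have htM' : t ≤ M' := le_max_left _ _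
  obtain ⟨u₀, hu₀mem, hu₀min⟩ :=
    (isCompact_Icc : IsCompact (Icc t M')).exists_isMinOn
      (nonempty_Icc.mpr htM') (hcont.continuousOn)
  have hu₀t : t ≤ u₀ := hu₀mem.1
  have hu₀lb : ∀ u, t ≤ u → X u₀ ≤ X u := by
    intro u hu
    by_cases huM : u ≤ M'
    · exact hu₀min ⟨hu, huM⟩
    · have huK : u ∉ K := fun hK' => huM (le_trans (hM u hK') (le_max_right _ _))
      have h1 : X t + 1 ≤ X u := hK u huK
      have h2 : X u₀ ≤ X t := hu₀min ⟨le_refl t, htM'⟩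
      linarith
  have hhu₀ : h = X u₀ := by
    rw [hh]
    apply le_antisymm
    · exact csInf_le ⟨0, fun y ⟨x, _, hxy⟩ => hxy ▸ hnonneg x⟩ ⟨u₀, hu₀t, rfl⟩
    · exact le_csInf (Nonempty.image _ ⟨t, le_refl t⟩)
        (fun y ⟨x, hx, hxy⟩ => hxy ▸ hu₀lb x hx)
  -- Step 2: for r in range, Γ r belongs to its defining set.
  have hΓmem : ∀ r ∈ Icc 0 (X t - h), t ≤ Γ r ∧ X (Γ r) = X t - r := by
    intro r hr
    have hSne : ({u : ℝ | t ≤ u ∧ X u = X t - r}).Nonempty := by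
      have hsub := intermediate_value_Icc' hu₀t hcont.continuousOn
      have : X t - r ∈ Icc (X u₀) (X t) := by
        constructor
        · rw [← hhu₀]; linarith [hr.2]
        · linarith [hr.1]
      obtain ⟨c, hc, hXc⟩ := hsub this
      exact ⟨c, hc.1, hXc⟩
    have hScl : IsClosed {u : ℝ | t ≤ u ∧ X u = X t - r} := by
      have : {u : ℝ | t ≤ u ∧ X u = X t - r}
          = Ici t ∩ X ⁻¹' {X t - r} := by ext u; simp [Set.mem_setOf_eq]
      rw [this]
      exact isClosed_Ici.inter (isClosed_singleton.preimage hcont)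
    have hSbdd : BddBelow {u : ℝ | t ≤ u ∧ X u = X t - r} :=
      ⟨t, fun u hu => hu.1⟩
    have := hScl.csInf_mem hSne hSbdd
    rw [← hΓ r] at this
    exact this
  -- Step 3: on [t, Γ r], X stays above X t - r.
  have habove : ∀ r ∈ Icc 0 (X t - h), ∀ u, t ≤ u → u ≤ Γ r → X t - r ≤ X u := by
    intro r hr u hu huΓ
    by_contra hlt
    push_neg at hlt
    have hsub := intermediate_value_Icc' hu hcont.continuousOn
    have : X t - r ∈ Icc (X u) (X t) := ⟨le_of_lt hlt, by linarith [hr.1]⟩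
    obtain ⟨v, hv, hXv⟩ := hsub this
    have hΓv : Γ r ≤ v := by
      rw [hΓ r]
      exact csInf_le ⟨t, fun w hw => hw.1⟩ ⟨hv.1, hXv⟩
    have : v = u := le_antisymm hv.2 (le_trans huΓ hΓv)
    rw [this] at hXv
    linarith
  -- Step 4: monotonicity of Γ.
  have hmono : ∀ r ∈ Icc 0 (X t - h), ∀ r' ∈ Icc 0 (X t - h), r ≤ r' →
      Γ r ≤ Γ r' := by
    intro r hr r' hr' hrr'
    obtain ⟨h1, h2⟩ := hΓmem r' hr'
    have hsub := intermediate_value_Icc' h1 hcont.continuousOn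
    have : X t - r ∈ Icc (X (Γ r')) (X t) := by
      rw [h2]; exact ⟨by linarith, by linarith [hr.1]⟩
    obtain ⟨v, hv, hXv⟩ := hsub this
    have : Γ r ≤ v := by
      rw [hΓ r]
      exact csInf_le ⟨t, fun w hw => hw.1⟩ ⟨hv.1, hXv⟩
    exact le_trans this hv.2
  -- Step 5: the key computation for r ≤ r'.
  have key : ∀ r ∈ Icc 0 (X t - h), ∀ r' ∈ Icc 0 (X t - h), r ≤ r' →
      crtDist X (Γ r) (Γ r') = r' - r := by
    intro r hr r' hr' hrr'
    obtain ⟨hΓrt, hΓrX⟩ := hΓmem r hr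
    obtain ⟨hΓr't, hΓr'X⟩ := hΓmem r' hr'
    have hΓΓ : Γ r ≤ Γ r' := hmono r hr r' hr' hrr'
    have hpos : 0 ≤ Γ r * Γ r' :=
      mul_nonneg (le_trans ht.le hΓrt) (le_trans ht.le hΓr't)
    have hcheck : crtCheck X (Γ r) (Γ r') = X t - r' := by
      rw [crtCheck, if_pos hpos, uIcc_of_le hΓΓ]
      apply le_antisymm
      · exact csInf_le ⟨X t - r', fun y ⟨x, hx, hxy⟩ => hxy ▸
          habove r' hr' x (le_trans hΓrt hx.1) hx.2⟩
          ⟨Γ r', ⟨hΓΓ, le_refl _⟩, hΓr'X⟩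
      · exact le_csInf (Nonempty.image _ (nonempty_Icc.mpr hΓΓ))
          (fun y ⟨x, hx, hxy⟩ => hxy ▸
            habove r' hr' x (le_trans hΓrt hx.1) hx.2)
    rw [crtDist, hcheck, hΓrX, hΓr'X]; ring
  -- Conclusion.
  intro r hr r' hr'
  rcases le_total r r' with hle | hle
  · rw [key r hr r' hr' hle, abs_of_nonpos (by linarith), neg_sub]
  · have hsymm : crtDist X (Γ r) (Γ r') = crtDist X (Γ r') (Γ r) := by
      unfold crtDist crtCheck
      rw [mul_comm (Γ r), Set.uIcc_comm, min_comm, max_comm]; ring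
    rw [hsymm, key r' hr' r hr hle, abs_of_nonneg (by linarith)]
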